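/- The map Ψ : P(n) → Luk(n), which sends a partition π to the Lukasiewicz path with rise-vector (q_1, ..., q_n) where q_m = |V| - 1 if m is the minimum of a block V of π and q_m = -1 otherwise, is well-defined: the vector (q_1, ..., q_n) always satisfies the partial-sum conditions defining a rise-vector of a Lukasiewicz path. -/

import Mathlib

/-- `P` is a partition of `{1,...,n}` (modelled on `Fin n`): the blocks are nonempty
and every element lies in exactly one block. -/
def IsPartition {n : ℕ} (P : Finset (Finset (Fin n))) : Prop :=
  ∅ ∉ P ∧ ∀ a : Fin n, ∃! V, V ∈ P ∧ a ∈ V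

/-- The map `Ψ : P(n) → Luk(n)` is well-defined: if `q m = |V| - 1` when `m` is the
minimum of its block `V` and `q m = -1` otherwise, then `q` satisfies the partial-sum
conditions defining the rise-vector of a Lukasiewicz path. -/
theorem stmt2 (n : ℕ) (P : Finset (Finset (Fin n))) (hP : IsPartition P)
    (q : Fin n → ℤ)
    (hq : ∀ V ∈ P, ∀ m ∈ V,
      q m = if ∀ x ∈ V, m ≤ x then ((V.card : ℤ) - 1) else -1) :
    (∀ m : Fin n, 0 ≤ ∑ i ∈ Finset.univ.filter (fun i => i ≤ m), q i) ∧
      ∑ i, q i = 0 := by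
  obtain ⟨hne, huniq⟩ := hP
  have hcover : P.biUnion id = Finset.univ := by
    ext a
    simp only [Finset.mem_biUnion, Finset.mem_univ, iff_true, id]
    obtain ⟨V, hV, _⟩ := huniq a
    exact ⟨V, hV.1, hV.2⟩
  have hdisj : ∀ V ∈ P, ∀ W ∈ P, V ≠ W → Disjoint V W := by
    intro V hV W hW hVW
    rw [Finset.disjoint_left]
    intro a haV haW
    exact hVW ((huniq a).unique ⟨hV, haV⟩ ⟨hW, haW⟩)
  -- value of q on a block
  have hq' : ∀ V, V ∈ P → ∀ i, ∀ hi : i ∈ V,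
      q i = if i = V.min' ⟨i, hi⟩ then ((V.card : ℤ) - 1) else -1 := by
    intro V hV i hi
    rw [hq V hV i hi]
    by_cases h : i = V.min' ⟨i, hi⟩
    · rw [if_pos h, if_pos]
      intro x hx; rw [h]; exact V.min'_le x hx
    · rw [if_neg h, if_neg]
      intro hall
      exact h (le_antisymm (hall _ (V.min'_mem _)) (V.min'_le i hi))
  -- sum of q over a subset S of a block V
  have hblock : ∀ V, ∀ hV : V ∈ P, ∀ S : Finset (Fin n), S ⊆ V →
      ∑ i ∈ S, q i =
        (if V.min' (Finset.nonempty_iff_ne_empty.mpr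
            (fun h => hne (h ▸ hV))) ∈ S then (V.card : ℤ) else 0) - S.card := by
    intro V hV S hS
    have hVne : V.Nonempty := Finset.nonempty_iff_ne_empty.mpr (fun h => hne (h ▸ hV))
    set m₀ := V.min' hVne with hm₀
    have : ∀ i ∈ S, q i = (if i = m₀ then (V.card : ℤ) else 0) - 1 := by
      intro i hi
      rw [hq' V hV i (hS hi)]
      by_cases h : i = m₀
      · simp [h, ← hm₀]
      · simp [h, ← hm₀]
    rw [Finset.sum_congr rfl this, Finset.sum_sub_distrib, Finset.sum_ite_eq' S m₀]
    simp
  constructor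
  · intro m
    rw [← hcover, Finset.filter_biUnion, Finset.sum_biUnion]
    · apply Finset.sum_nonneg
      intro V hV
      have hVne : V.Nonempty := Finset.nonempty_iff_ne_empty.mpr (fun h => hne (h ▸ hV))
      have hsub : (id V).filter (fun i => i ≤ m) ⊆ V := Finset.filter_subset _ _
      rw [hblock V hV _ hsub]
      by_cases h : V.min' hVne ∈ (id V).filter (fun i => i ≤ m)
      · rw [if_pos h]
        have : ((id V).filter (fun i => i ≤ m)).card ≤ V.card :=
          Finset.card_le_card hsub
        have h2 : (((id V).filter (fun i => i ≤ m)).card : ℤ) ≤ (V.card : ℤ) :=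
          Int.ofNat_le.mpr this
        linarith
      · rw [if_neg h]
        have : (id V).filter (fun i => i ≤ m) = ∅ := by
          by_contra hcon
          obtain ⟨i, hi⟩ := Finset.nonempty_iff_ne_empty.mpr hcon
          simp only [Finset.mem_filter, id] at hi
          apply h
          simp only [Finset.mem_filter, id]
          exact ⟨V.min'_mem hVne, le_trans (V.min'_le i hi.1) hi.2⟩
        rw [this]
        simp
    · intro V hV W hW hVW
      exact Finset.disjoint_filter_filter (hdisj V hV W hW hVW)
  · have hdisj' : (↑P : Set (Finset (Fin n))).PairwiseDisjoint id := by
      intro V hV W hW hVW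
      exact hdisj V hV W hW hVW
    rw [← hcover, Finset.sum_biUnion hdisj']
    apply Finset.sum_eq_zero
    intro V hV
    have hVne : V.Nonempty := Finset.nonempty_iff_ne_empty.mpr (fun h => hne (h ▸ hV))
    rw [show (id V : Finset (Fin n)) = V from rfl, hblock V hV V (subset_refl V),
      if_pos (V.min'_mem hVne)]
    ring
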